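/- Let R be a non-commutative ring and Null(R) the set of null polynomials on R (with right substitution). Then Null(R) is a two-sided ideal of R[x] if and only if Null(R) is closed under right multiplication by elements of R (i.e., is a right R-module). -/
import Mathlib

open Polynomial

/-- `Null(R)` is a two-sided ideal of `R[x]` iff it is closed under right
multiplication by elements of `R`. -/
theorem null_twoSidedIdeal_iff_right_closed (R : Type*) [Ring R] :
    (∃ I : TwoSidedIdeal (Polynomial R),
        ∀ f : Polynomial R, f ∈ I ↔ ∀ r : R, Polynomial.eval r f = 0) ↔
    (∀ f : Polynomial R, (∀ r : R, Polynomial.eval r f = 0) →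
        ∀ c : R, ∀ r : R, Polynomial.eval r (f * Polynomial.C c) = 0) := by
  constructor
  · rintro ⟨I, hI⟩ f hf c r
    exact (hI _).1 (I.mul_mem_right _ _ ((hI f).2 hf)) r
  · intro H
    refine ⟨TwoSidedIdeal.mk' {f | ∀ r : R, eval r f = 0}
      (by simp) (fun {x y} hx hy r => by simp [eval_add, hx r, hy r])
      (fun {x} hx r => by simp [hx r]) ?_ ?_, fun f => TwoSidedIdeal.mem_mk' _ _ _ _ _ _ f⟩
    · -- mul_mem_left : y null → x * y null
      intro x y hy
      induction x using Polynomial.induction_on' with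
      | add p q hp hq => intro r; simp [add_mul, eval_add, hp r, hq r]
      | monomial n a =>
        intro r
        rw [← C_mul_X_pow_eq_monomial, mul_assoc, X_pow_mul, ← mul_assoc]
        rw [eval_mul_X_pow, eval_C_mul, hy r, mul_zero, zero_mul]
    · -- mul_mem_right : x null → x * y null
      intro x y hx
      induction y using Polynomial.induction_on' with
      | add p q hp hq => intro r; simp [mul_add, eval_add, hp r, hq r]
      | monomial n a =>
        intro r
        rw [← C_mul_X_pow_eq_monomial, ← mul_assoc, eval_mul_X_pow,
          H x hx a r, zero_mul]
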